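/- Let h : ℝ → ℝ be twice differentiable and p₁, p₂ > 0. Define v₀ = h and v₁ = v̇₀ + p₁v₀. If v̇₁(t) + p₂v₁(t) ≥ 0 for all t ≥ 0, v₀(0) ≥ 0, and v₁(0) ≥ 0, then h(t) ≥ 0 for all t ≥ 0. -/

import Mathlib

lemma aux_gronwall (f : ℝ → ℝ) (hf : Differentiable ℝ f) (p : ℝ)
    (hc : ∀ t ≥ (0:ℝ), deriv f t + p * f t ≥ 0) (h0 : f 0 ≥ 0) :
    ∀ t ≥ (0:ℝ), f t ≥ 0 := by
  intro t ht
  set g : ℝ → ℝ := fun s => Real.exp (p * s) * f s with hg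
  have hgd : Differentiable ℝ g := by
    exact (Real.differentiable_exp.comp (differentiable_const _ |>.mul differentiable_id)).mul hf
  have hderiv : ∀ s, deriv g s = Real.exp (p * s) * (deriv f s + p * f s) := by
    intro s
    have h1 : HasDerivAt (fun s : ℝ => Real.exp (p * s)) (p * Real.exp (p * s)) s := by
      have := ((hasDerivAt_id' s).const_mul p).exp
      simpa [mul_comm] using this
    have h2 : HasDerivAt g (p * Real.exp (p * s) * f s + Real.exp (p * s) * deriv f s) s :=
      h1.mul (hf s).hasDerivAt
    rw [h2.deriv]; ring
  have hmono : MonotoneOn g (Set.Ici 0) := by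
    apply monotoneOn_of_deriv_nonneg (convex_Ici 0) hgd.continuous.continuousOn
      (fun x _ => (hgd x).differentiableWithinAt)
    intro x hx
    rw [hderiv]
    have := hc x (le_of_lt (by simpa using hx))
    positivity
  have : g 0 ≤ g t := hmono (Set.mem_Ici.mpr le_rfl) (Set.mem_Ici.mpr ht) ht
  have hg0 : (0:ℝ) ≤ g 0 := by simpa [hg] using h0
  have hgt : (0:ℝ) ≤ g t := le_trans hg0 this
  have hexp : 0 < Real.exp (p * t) := Real.exp_pos _
  have hgt' : 0 ≤ Real.exp (p * t) * f t := hgt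
  nlinarith [hgt', hexp]

theorem stmt5 (h : ℝ → ℝ) (hdiff : ContDiff ℝ 2 h) (p₁ p₂ : ℝ) (hp₁ : 0 < p₁) (hp₂ : 0 < p₂)
    (v₀ : ℝ → ℝ) (hv₀ : v₀ = h)
    (v₁ : ℝ → ℝ) (hv₁ : v₁ = fun t => deriv v₀ t + p₁ * v₀ t)
    (hcond : ∀ t ≥ (0:ℝ), deriv v₁ t + p₂ * v₁ t ≥ 0)
    (h0 : v₀ 0 ≥ 0) (h1 : v₁ 0 ≥ 0) :
    ∀ t ≥ (0:ℝ), h t ≥ 0 := by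
  have hd0 : Differentiable ℝ v₀ := by
    rw [hv₀]; exact hdiff.differentiable (by norm_num)
  have hd' : Differentiable ℝ (deriv v₀) := by
    rw [hv₀]
    have h2 : ContDiff ℝ (1+1) h := by norm_num; exact hdiff
    exact ((contDiff_succ_iff_deriv.mp h2).2.2).differentiable one_ne_zero
  have hd1 : Differentiable ℝ v₁ := by
    rw [hv₁]; exact hd'.add (hd0.const_mul p₁)
  have hv1nn : ∀ t ≥ (0:ℝ), v₁ t ≥ 0 := aux_gronwall v₁ hd1 p₂ hcond h1
  have hv0nn : ∀ t ≥ (0:ℝ), v₀ t ≥ 0 := by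
    apply aux_gronwall v₀ hd0 p₁ _ h0
    intro t ht
    have := hv1nn t ht
    rw [hv₁] at this
    simpa using this
  intro t ht
  have := hv0nn t ht
  rwa [hv₀] at this
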